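/- arXiv:0710.5478 — 2 statements merged into one kernel-verified Lean document; each statement's English description precedes it below -/
import Mathlib

section
/- Let r : D → ℝⁿ be harmonic on a connected open set D ⊂ ℝ². If the conformality conditions |r_u|² = |r_v|² and r_u · r_v = 0 hold on a nonempty open subset of D, then they hold on all of D. -/
set_option maxHeartbeats 1000000

open Complex

private lemma cr_diff {f : ℂ → ℂ} {L : ℂ →L[ℝ] ℂ} {z : ℂ}
    (h : HasFDerivAt f L z) (hCR : L Complex.I = L 1 * Complex.I) :
    DifferentiableAt ℂ f z := by
  have hlin : ∀ w : ℂ, L w = L 1 * w := by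
    intro w
    have hw : w = w.re • (1 : ℂ) + w.im • Complex.I := by
      simp [Complex.real_smul, Complex.re_add_im]
    rw [hw, map_add, map_smul, map_smul, hCR]
    simp only [Complex.real_smul, smul_eq_mul]
    ring
  have hM : ((L 1 • ContinuousLinearMap.id ℂ ℂ : ℂ →L[ℂ] ℂ)).restrictScalars ℝ = L := by
    refine ContinuousLinearMap.ext fun w => ?_
    simp [hlin w, smul_eq_mul]
  exact (hasFDerivAt_of_restrictScalars ℝ h hM).differentiableAt

open RealInnerProductSpace in
private lemma phi_diff {n : ℕ} {r : ℂ → EuclideanSpace ℝ (Fin n)} {z : ℂ}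
    (hc2 : ContDiffAt ℝ 2 r z)
    (hharm : fderiv ℝ (fun w => fderiv ℝ r w 1) z 1 +
        fderiv ℝ (fun w => fderiv ℝ r w Complex.I) z Complex.I = 0) :
    DifferentiableAt ℂ (fun t =>
      ((⟪fderiv ℝ r t 1, fderiv ℝ r t 1⟫ - ⟪fderiv ℝ r t Complex.I, fderiv ℝ r t Complex.I⟫ : ℝ) : ℂ)
        - 2 * ((⟪fderiv ℝ r t 1, fderiv ℝ r t Complex.I⟫ : ℝ) : ℂ) * Complex.I) z := by
  have hd1 : ContDiffAt ℝ 1 (fderiv ℝ r) z := hc2.fderiv_right (by norm_num)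
  have hd2 : DifferentiableAt ℝ (fderiv ℝ r) z := hd1.differentiableAt one_ne_zero
  set f'' := fderiv ℝ (fderiv ℝ r) z with hf''def
  have hf'' : HasFDerivAt (fderiv ℝ r) f'' z := hd2.hasFDerivAt
  have hA1 : HasFDerivAt (fun w => fderiv ℝ r w 1)
      ((ContinuousLinearMap.apply ℝ (EuclideanSpace ℝ (Fin n)) (1 : ℂ)).comp f'') z :=
    (ContinuousLinearMap.apply ℝ (EuclideanSpace ℝ (Fin n)) (1 : ℂ)).hasFDerivAt.comp z hf''
  have hB1 : HasFDerivAt (fun w => fderiv ℝ r w Complex.I)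
      ((ContinuousLinearMap.apply ℝ (EuclideanSpace ℝ (Fin n)) Complex.I).comp f'') z :=
    (ContinuousLinearMap.apply ℝ (EuclideanSpace ℝ (Fin n)) Complex.I).hasFDerivAt.comp z hf''
  have hsym : f'' Complex.I 1 = f'' 1 Complex.I :=
    hc2.isSymmSndFDerivAt (by simp [minSmoothness_of_isRCLikeNormedField]) Complex.I 1
  have hII : f'' Complex.I Complex.I = - f'' 1 1 := by
    have h1 := hA1.fderiv
    have h2 := hB1.fderiv
    rw [h1, h2] at hharm
    simp only [ContinuousLinearMap.coe_comp', Function.comp_apply,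
      ContinuousLinearMap.apply_apply] at hharm
    exact eq_neg_of_add_eq_zero_right hharm
  have hu : HasFDerivAt
      (fun t => (⟪fderiv ℝ r t 1, fderiv ℝ r t 1⟫ : ℝ) - ⟪fderiv ℝ r t Complex.I, fderiv ℝ r t Complex.I⟫)
      _ z := (hA1.inner ℝ hA1).sub (hB1.inner ℝ hB1)
  have hv : HasFDerivAt (fun t => (⟪fderiv ℝ r t 1, fderiv ℝ r t Complex.I⟫ : ℝ)) _ z :=
    hA1.inner ℝ hB1
  have h1 := Complex.ofRealCLM.hasFDerivAt.comp z hu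
  have h2 := ((Complex.ofRealCLM.hasFDerivAt.comp z hv).const_mul (2 : ℂ)).mul_const Complex.I
  refine cr_diff (h1.sub h2) ?_
  simp only [ContinuousLinearMap.coe_sub', Pi.sub_apply, ContinuousLinearMap.coe_comp',
    Function.comp_apply, ContinuousLinearMap.smul_apply, ContinuousLinearMap.coe_smul',
    Pi.smul_apply, fderivInnerCLM_apply, ContinuousLinearMap.prod_apply,
    ContinuousLinearMap.apply_apply, Complex.ofRealCLM_apply, smul_eq_mul]
  rw [hII, hsym]
  simp only [inner_neg_right, inner_neg_left]
  rw [Complex.ext_iff]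
  constructor <;>
  · simp only [Complex.add_re, Complex.add_im, Complex.sub_re, Complex.sub_im, Complex.mul_re,
      Complex.mul_im, Complex.I_re, Complex.I_im, Complex.ofReal_re, Complex.ofReal_im,
      Complex.neg_re, Complex.neg_im, Complex.one_re, Complex.one_im, Complex.re_ofNat, Complex.im_ofNat]
    ring_nf
    linarith [real_inner_comm ((fderiv ℝ r z) 1) ((f'' 1) 1),
      real_inner_comm ((fderiv ℝ r z) 1) ((f'' 1) Complex.I),
      real_inner_comm ((fderiv ℝ r z) Complex.I) ((f'' 1) 1),
      real_inner_comm ((fderiv ℝ r z) Complex.I) ((f'' 1) Complex.I)]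

open RealInnerProductSpace

/-- For a harmonic map r on a connected open D ⊂ ℝ² ≅ ℂ, if the
conformality relations hold on a nonempty open subset of D, they hold on all of D. -/
theorem stmt4 {n : ℕ} (D : Set ℂ) (hD : IsOpen D) (hDconn : IsConnected D)
    (r : ℂ → EuclideanSpace ℝ (Fin n)) (hr : ContDiffOn ℝ 2 r D)
    (harm : ∀ z ∈ D,
      fderiv ℝ (fun w => fderiv ℝ r w 1) z 1 +
        fderiv ℝ (fun w => fderiv ℝ r w Complex.I) z Complex.I = 0)
    (U : Set ℂ) (hU : IsOpen U) (hUne : U.Nonempty) (hUD : U ⊆ D)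
    (hconfU : ∀ z ∈ U,
      ‖fderiv ℝ r z 1‖ ^ 2 = ‖fderiv ℝ r z Complex.I‖ ^ 2 ∧
        (inner ℝ (fderiv ℝ r z 1) (fderiv ℝ r z Complex.I) : ℝ) = 0) :
    ∀ z ∈ D,
      ‖fderiv ℝ r z 1‖ ^ 2 = ‖fderiv ℝ r z Complex.I‖ ^ 2 ∧
        (inner ℝ (fderiv ℝ r z 1) (fderiv ℝ r z Complex.I) : ℝ) = 0 := by
  set φ : ℂ → ℂ := fun t =>
    ((⟪fderiv ℝ r t 1, fderiv ℝ r t 1⟫ - ⟪fderiv ℝ r t Complex.I, fderiv ℝ r t Complex.I⟫ : ℝ) : ℂ)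
      - 2 * ((⟪fderiv ℝ r t 1, fderiv ℝ r t Complex.I⟫ : ℝ) : ℂ) * Complex.I with hφdef
  have hdiff : DifferentiableOn ℂ φ D := fun z hz =>
    (phi_diff (hr.contDiffAt (hD.mem_nhds hz)) (harm z hz)).differentiableWithinAt
  have hanal : AnalyticOnNhd ℂ φ D := hdiff.analyticOnNhd hD
  obtain ⟨z₀, hz₀⟩ := hUne
  have hev : φ =ᶠ[nhds z₀] 0 := by
    filter_upwards [hU.mem_nhds hz₀] with w hw
    obtain ⟨h1, h2⟩ := hconfU w hw
    have e1 : (⟪fderiv ℝ r w 1, fderiv ℝ r w 1⟫ : ℝ) = ‖fderiv ℝ r w 1‖ ^ 2 := by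
      rw [real_inner_self_eq_norm_sq]
    have e2 : (⟪fderiv ℝ r w Complex.I, fderiv ℝ r w Complex.I⟫ : ℝ)
        = ‖fderiv ℝ r w Complex.I‖ ^ 2 := by
      rw [real_inner_self_eq_norm_sq]
    show φ w = 0
    rw [hφdef]
    simp only [h2, e1, e2, h1]
    simp
  have hzero : Set.EqOn φ 0 D :=
    hanal.eqOn_zero_of_preconnected_of_eventuallyEq_zero hDconn.isPreconnected (hUD hz₀) hev
  intro z hz
  have hz0 : φ z = 0 := hzero hz
  rw [hφdef] at hz0
  simp only [Complex.ext_iff, Complex.sub_re, Complex.sub_im, Complex.mul_re, Complex.mul_im,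
    Complex.ofReal_re, Complex.ofReal_im, Complex.I_re, Complex.I_im, Complex.re_ofNat,
    Complex.im_ofNat, Complex.zero_re, Complex.zero_im] at hz0
  obtain ⟨ha, hb⟩ := hz0
  constructor
  · have := ha
    rw [real_inner_self_eq_norm_sq, real_inner_self_eq_norm_sq] at this
    linarith
  · linarith
end

section
/- For the Douglas functional A on maps g : S¹ → ℝⁿ, precomposition with a Möbius transformation of the disc restricted to the boundary preserves the value of A: if φ is the boundary homeomorphism induced by a conformal automorphism of the unit disc, then A(g ∘ φ) = A(g). -/
open Real MeasureTheory Metric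
open scoped ENNReal

/-- The Douglas A-functional of a map g defined on the unit circle in ℂ, valued in
[0,∞], expressed via the angle parameterisation θ ↦ e^{iθ}. -/
noncomputable def douglasACircle {n : ℕ} (g : ℂ → EuclideanSpace ℝ (Fin n)) : ℝ≥0∞ :=
  ENNReal.ofReal (1 / (4 * π)) *
    ∫⁻ θ in Set.Icc (0:ℝ) (2 * π), ∫⁻ φ in Set.Icc (0:ℝ) (2 * π),
      ENNReal.ofReal
        (‖g (Complex.exp (θ * Complex.I)) - g (Complex.exp (φ * Complex.I))‖ ^ 2 /
          (4 * Real.sin ((θ - φ) / 2) ^ 2))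

/-! ### Auxiliary integral lemmas -/

lemma lint_Icc_Ioc (f : ℝ → ℝ≥0∞) (a b : ℝ) :
    ∫⁻ x in Set.Icc a b, f x = ∫⁻ x in Set.Ioc a b, f x :=
  setLIntegral_congr (MeasureTheory.Ioc_ae_eq_Icc).symm

lemma lint_shift (f : ℝ → ℝ≥0∞) (t a b : ℝ) :
    ∫⁻ x in Set.Ioc a b, f x = ∫⁻ x in Set.Ioc (a - t) (b - t), f (x + t) := by
  have h1 : ∫⁻ x in Set.Ioc a b, f x = ∫⁻ x, (Set.Ioc a b).indicator f x := by
    rw [lintegral_indicator measurableSet_Ioc _]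
  have h2 : ∫⁻ x in Set.Ioc (a-t) (b-t), f (x + t)
      = ∫⁻ x, (Set.Ioc (a-t) (b-t)).indicator (fun x => f (x + t)) x := by
    rw [lintegral_indicator measurableSet_Ioc _]
  rw [h1, h2, ← lintegral_add_right_eq_self (μ := volume) ((Set.Ioc a b).indicator f) t]
  congr 1
  ext x
  by_cases hx : x + t ∈ Set.Ioc a b
  · have hx' : x ∈ Set.Ioc (a-t) (b-t) := by
      simp only [Set.mem_Ioc] at hx ⊢; constructor <;> linarith [hx.1, hx.2]
    rw [Set.indicator_of_mem hx, Set.indicator_of_mem hx']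
  · have hx' : x ∉ Set.Ioc (a-t) (b-t) := by
      simp only [Set.mem_Ioc] at hx ⊢
      intro h1' ; by_contra h2'; push_neg at h2'; exact hx ⟨by linarith, by linarith⟩
    rw [Set.indicator_of_notMem hx, Set.indicator_of_notMem hx']

lemma lint_periodic (f : ℝ → ℝ≥0∞) (T : ℝ) (hT : 0 < T) (hf : ∀ x, f (x + T) = f x) (c : ℝ) :
    ∫⁻ x in Set.Ioc c (c + T), f x = ∫⁻ x in Set.Ioc 0 T, f x := by
  have hz : ∀ (k : ℤ) (x : ℝ), f (x + k * T) = f x := by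
    intro k
    induction k using Int.induction_on with
    | zero => simp
    | succ n ih => intro x; have := hf (x + n * T); push_cast at *; rw [← ih x, ← this]; ring_nf
    | pred n ih => intro x
                   have h0 := hf (x + (-(n:ℝ) - 1) * T)
                   push_cast at *
                   have h1 : x + (-(n:ℝ) - 1) * T + T = x + (-(n:ℝ)) * T := by ring
                   rw [h1] at h0
                   rw [← h0, ih]
  set k : ℤ := ⌊c / T⌋ with hk
  have hc1 : (k : ℝ) * T ≤ c := by
    rw [hk]; have := Int.floor_le (c / T); calc ((⌊c/T⌋:ℤ):ℝ) * T ≤ (c/T)*T := by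
                                                  exact mul_le_mul_of_nonneg_right this hT.le
         _ = c := by field_simp
  have hc2 : c < (k : ℝ) * T + T := by
    rw [hk]
    have := Int.lt_floor_add_one (c / T)
    have h2 : c / T * T < ((⌊c/T⌋ : ℝ) + 1) * T := mul_lt_mul_of_pos_right this hT
    rw [div_mul_cancel₀ _ hT.ne'] at h2; linarith
  set c' : ℝ := c - k * T with hc'
  have hc'0 : 0 ≤ c' := by simp [hc']; linarith
  have hc'T : c' ≤ T := by simp [hc']; linarith
  have step1 : ∫⁻ x in Set.Ioc c (c + T), f x = ∫⁻ x in Set.Ioc c' (c' + T), f x := by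
    rw [lint_shift f ((k:ℝ) * T) c (c + T)]
    have : c + T - (k:ℝ)*T = c' + T := by rw [hc']; ring
    rw [this]
    exact lintegral_congr fun x => hz k x
  rw [step1]
  have hsplit : Set.Ioc c' (c' + T) = Set.Ioc c' T ∪ Set.Ioc T (c' + T) :=
    (Set.Ioc_union_Ioc_eq_Ioc hc'T (by linarith)).symm
  have hsplit0 : Set.Ioc 0 T = Set.Ioc 0 c' ∪ Set.Ioc c' T :=
    (Set.Ioc_union_Ioc_eq_Ioc hc'0 hc'T).symm
  rw [hsplit, hsplit0,
    lintegral_union measurableSet_Ioc (Set.Ioc_disjoint_Ioc_of_le le_rfl),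
    lintegral_union measurableSet_Ioc (Set.Ioc_disjoint_Ioc_of_le le_rfl)]
  have htr : ∫⁻ x in Set.Ioc T (c' + T), f x = ∫⁻ x in Set.Ioc 0 c', f x := by
    rw [lint_shift f T T (c' + T)]
    simp only [sub_self, add_sub_cancel_right]
    exact lintegral_congr fun x => hf x
  rw [htr, add_comm]

lemma lint_periodic_Icc (f : ℝ → ℝ≥0∞) (T : ℝ) (hT : 0 < T) (hf : ∀ x, f (x + T) = f x)
    (c : ℝ) : ∫⁻ x in Set.Icc c (c + T), f x = ∫⁻ x in Set.Icc 0 T, f x := by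
  rw [lint_Icc_Ioc, lint_Icc_Ioc, lint_periodic f T hT hf c]

lemma lint_cov {s : Set ℝ} (hs : MeasurableSet s) {f f' : ℝ → ℝ}
    (hf' : ∀ x ∈ s, HasDerivWithinAt f (f' x) s x) (hinj : Set.InjOn f s) (G : ℝ → ℝ≥0∞) :
    ∫⁻ x in f '' s, G x = ∫⁻ x in s, ENNReal.ofReal |f' x| * G (f x) := by
  simpa only [ContinuousLinearMap.det_toSpanSingleton] using
    lintegral_image_eq_lintegral_abs_det_fderiv_mul volume hs
      (fun x hx => (hf' x hx).hasFDerivWithinAt) hinj G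

/-! ### The boundary map of a Möbius transformation -/

noncomputable def mobA (a : ℂ) (θ : ℝ) : ℂ :=
  1 - (starRingEnd ℂ) a * Complex.exp (θ * Complex.I)

noncomputable def mobRho (a : ℂ) (θ : ℝ) : ℝ :=
  (1 - Complex.normSq a) / Complex.normSq (mobA a θ)

noncomputable def mobTheta (a : ℂ) (α : ℝ) (θ : ℝ) : ℝ :=
  α + θ - 2 * Real.arctan ((mobA a θ).im / (mobA a θ).re)

variable {a : ℂ}

lemma exp_arctan_eq (w : ℂ) (hw : 0 < w.re) :
    Complex.exp ((Real.arctan (w.im / w.re) : ℂ) * Complex.I) = w / (‖w‖ : ℂ) := by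
  have habs : (0:ℝ) < ‖w‖ := by
    apply norm_pos_iff.mpr; intro h; rw [h] at hw; simp at hw
  have hsqrt : Real.sqrt (1 + (w.im / w.re) ^ 2) = ‖w‖ / w.re := by
    rw [show (1 : ℝ) + (w.im / w.re)^2 = (‖w‖ / w.re)^2 by
      rw [div_pow, div_pow, Complex.sq_norm, Complex.normSq_apply]; field_simp]
    exact Real.sqrt_sq (by positivity)
  have hcos : Real.cos (Real.arctan (w.im / w.re)) = w.re / ‖w‖ := by
    rw [Real.cos_arctan, hsqrt]; rw [one_div, inv_div]
  have hsin : Real.sin (Real.arctan (w.im / w.re)) = w.im / ‖w‖ := by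
    rw [Real.sin_arctan, hsqrt]; field_simp
  rw [Complex.exp_mul_I, ← Complex.ofReal_cos, ← Complex.ofReal_sin, hcos, hsin]
  rw [eq_div_iff (by exact_mod_cast habs.ne')]
  have hne : ((‖w‖ : ℂ)) ≠ 0 := by exact_mod_cast habs.ne'
  push_cast; field_simp; exact Complex.re_add_im w

lemma mobA_re_pos (ha : ‖a‖ < 1) (θ : ℝ) : 0 < (mobA a θ).re := by
  have h1 : ((starRingEnd ℂ) a * Complex.exp (θ * Complex.I)).re
      ≤ ‖(starRingEnd ℂ) a * Complex.exp (θ * Complex.I)‖ := Complex.re_le_norm _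
  have h2 : ‖(starRingEnd ℂ) a * Complex.exp (θ * Complex.I)‖ = ‖a‖ := by
    rw [norm_mul, Complex.norm_conj, Complex.norm_exp_ofReal_mul_I, mul_one]
  simp only [mobA, Complex.sub_re, Complex.one_re]
  linarith [h1, h2 ▸ h1]

lemma mobA_ne (ha : ‖a‖ < 1) (θ : ℝ) : mobA a θ ≠ 0 := by
  intro h
  have := mobA_re_pos ha θ
  rw [h] at this; simp at this

lemma normSq_mobA_pos (ha : ‖a‖ < 1) (θ : ℝ) : 0 < Complex.normSq (mobA a θ) :=
  Complex.normSq_pos.2 (mobA_ne ha θ)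

lemma normSq_a_lt (ha : ‖a‖ < 1) : Complex.normSq a < 1 := by
  have := Complex.sq_norm a
  nlinarith [norm_nonneg a]

lemma mobRho_pos (ha : ‖a‖ < 1) (θ : ℝ) : 0 < mobRho a θ :=
  div_pos (by linarith [normSq_a_lt ha]) (normSq_mobA_pos ha θ)

lemma exp_mobTheta (ha : ‖a‖ < 1) (α θ : ℝ) :
    Complex.exp ((mobTheta a α θ : ℂ) * Complex.I)
      = Complex.exp ((α : ℂ) * Complex.I) * (Complex.exp ((θ:ℂ) * Complex.I) - a) / mobA a θ := by
  have hA := mobA_ne ha θ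
  have hexpt := exp_arctan_eq (mobA a θ) (mobA_re_pos ha θ)
  have habs : ((‖mobA a θ‖ : ℂ)) ≠ 0 := by
    exact_mod_cast (norm_pos_iff.mpr hA).ne'
  have hconj : (starRingEnd ℂ) (mobA a θ)
      = 1 - a * Complex.exp (-(θ:ℂ) * Complex.I) := by
    simp only [mobA, map_sub, map_one, map_mul, Complex.conj_conj, ← Complex.exp_conj]
    congr 2
    simp [Complex.ext_iff]
  have hmulconj : mobA a θ * (starRingEnd ℂ) (mobA a θ) = ((‖mobA a θ‖ : ℂ))^2 := by
    rw [Complex.mul_conj]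
    norm_cast
    rw [← Complex.sq_norm]
  have hΘ : (mobTheta a α θ : ℂ) * Complex.I
      = (α:ℂ) * Complex.I + (θ:ℂ) * Complex.I
        + ((- (2 * Real.arctan ((mobA a θ).im / (mobA a θ).re)) : ℝ) : ℂ) * Complex.I := by
    push_cast [mobTheta]; ring
  rw [hΘ, Complex.exp_add, Complex.exp_add]
  have h2t : ((-(2 * Real.arctan ((mobA a θ).im / (mobA a θ).re)) : ℝ) : ℂ) * Complex.I
      = -(((Real.arctan ((mobA a θ).im / (mobA a θ).re) : ℝ) : ℂ) * Complex.I)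
        + -(((Real.arctan ((mobA a θ).im / (mobA a θ).re) : ℝ) : ℂ) * Complex.I) := by
    push_cast; ring
  rw [h2t, Complex.exp_add, Complex.exp_neg, hexpt]
  have hee : Complex.exp ((θ:ℂ) * Complex.I) * Complex.exp (-(θ:ℂ) * Complex.I) = 1 := by
    rw [← Complex.exp_add]; simp
  rw [hconj] at hmulconj
  field_simp [Complex.exp_ne_zero]
  rw [show Complex.I * (θ:ℂ) = θ * Complex.I by ring]
  linear_combination (-Complex.exp ((θ:ℂ) * Complex.I)) * hmulconj
    + (-(mobA a θ * a)) * hee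

lemma mobA_re (t : ℝ) : (mobA a t).re = 1 - (a.re * Real.cos t + a.im * Real.sin t) := by
  simp [mobA, Complex.mul_re, Complex.exp_ofReal_mul_I_re, Complex.exp_ofReal_mul_I_im]

lemma mobA_im (t : ℝ) : (mobA a t).im = -(a.re * Real.sin t - a.im * Real.cos t) := by
  simp [mobA, Complex.mul_im, Complex.exp_ofReal_mul_I_re, Complex.exp_ofReal_mul_I_im]
  ring

lemma mobA_key (t : ℝ) :
    (mobA a t).re ^ 2 + (mobA a t).im ^ 2 + (1 - Complex.normSq a) = 2 * (mobA a t).re := by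
  rw [mobA_re, mobA_im, Complex.normSq_apply]
  nlinarith [Real.sin_sq_add_cos_sq t]

lemma normSq_mobA (t : ℝ) :
    Complex.normSq (mobA a t) = (mobA a t).re ^ 2 + (mobA a t).im ^ 2 := by
  rw [Complex.normSq_apply]; ring

lemma hasDerivAt_mobTheta (ha : ‖a‖ < 1) (α θ : ℝ) :
    HasDerivAt (mobTheta a α) (mobRho a θ) θ := by
  have hre : (fun t => (mobA a t).re) = fun t => 1 - (a.re * Real.cos t + a.im * Real.sin t) :=
    funext mobA_re
  have him : (fun t => (mobA a t).im) = fun t => -(a.re * Real.sin t - a.im * Real.cos t) :=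
    funext mobA_im
  have hP : HasDerivAt (fun t => (mobA a t).re)
      (a.re * Real.sin θ - a.im * Real.cos θ) θ := by
    rw [hre]
    have := ((Real.hasDerivAt_cos θ).const_mul a.re).add ((Real.hasDerivAt_sin θ).const_mul a.im)
    have h2 := this.const_sub 1
    refine h2.congr_deriv ?_
    ring
  have hQ : HasDerivAt (fun t => (mobA a t).im)
      (-(a.re * Real.cos θ + a.im * Real.sin θ)) θ := by
    rw [him]
    have := (((Real.hasDerivAt_sin θ).const_mul a.re).sub
      ((Real.hasDerivAt_cos θ).const_mul a.im)).neg
    refine this.congr_deriv ?_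
    ring
  have hp : (mobA a θ).re ≠ 0 := (mobA_re_pos ha θ).ne'
  have hdiv := hQ.div hP hp
  have harct := (Real.hasDerivAt_arctan ((mobA a θ).im / (mobA a θ).re)).comp θ hdiv
  have hfull : HasDerivAt (mobTheta a α)
      (1 - 2 * ((1 / (1 + ((mobA a θ).im / (mobA a θ).re) ^ 2)) *
        ((-(a.re * Real.cos θ + a.im * Real.sin θ) * (mobA a θ).re -
          (mobA a θ).im * (a.re * Real.sin θ - a.im * Real.cos θ)) / (mobA a θ).re ^ 2))) θ := by
    have hid : HasDerivAt (fun t : ℝ => α + t) 1 θ := (hasDerivAt_id θ).const_add α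
    have := hid.sub (harct.const_mul 2)
    exact this
  convert hfull using 1
  have hkey := mobA_key (a := a) θ
  have hQval : -(a.re * Real.cos θ + a.im * Real.sin θ) = (mobA a θ).re - 1 := by
    rw [mobA_re]; ring
  have hPval : a.re * Real.sin θ - a.im * Real.cos θ = -(mobA a θ).im := by
    rw [mobA_im]; ring
  rw [mobRho, normSq_mobA, hQval, hPval]
  have hs : (mobA a θ).re ^ 2 + (mobA a θ).im ^ 2 ≠ 0 := by positivity
  have hden : 1 + ((mobA a θ).im / (mobA a θ).re) ^ 2 ≠ 0 := by positivity
  have h1n : 1 - Complex.normSq a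
      = 2 * (mobA a θ).re - ((mobA a θ).re ^ 2 + (mobA a θ).im ^ 2) := by linarith [hkey]
  rw [h1n]
  field_simp
  ring

lemma abs_exp_sub_sq (x y : ℝ) :
    ‖Complex.exp ((x:ℂ) * Complex.I) - Complex.exp ((y:ℂ) * Complex.I)‖ ^ 2
      = 4 * Real.sin ((x - y) / 2) ^ 2 := by
  rw [Complex.sq_norm, Complex.normSq_apply]
  simp only [Complex.sub_re, Complex.sub_im, Complex.exp_ofReal_mul_I_re,
    Complex.exp_ofReal_mul_I_im]
  have h1 := Real.sin_sq_eq_half_sub ((x - y) / 2)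
  have h2 : 2 * ((x - y)/2) = x - y := by ring
  rw [h2] at h1
  have h3 := Real.cos_sub x y
  nlinarith [Real.sin_sq_add_cos_sq x, Real.sin_sq_add_cos_sq y]

lemma mobTheta_two_pi (α : ℝ) : mobTheta a α (2 * π) = mobTheta a α 0 + 2 * π := by
  have h : mobA a (2 * π) = mobA a 0 := by
    rw [mobA, mobA,
      show ((2 * π : ℝ) : ℂ) * Complex.I = 2 * (π:ℂ) * Complex.I by push_cast; ring,
      Complex.exp_two_pi_mul_I]
    norm_num
  rw [mobTheta, mobTheta, h]
  ring

lemma mob_diff (ha : ‖a‖ < 1) (α θ φ : ℝ) :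
    Complex.exp ((α : ℂ) * Complex.I) * (Complex.exp ((θ:ℂ) * Complex.I) - a) / mobA a θ
      - Complex.exp ((α : ℂ) * Complex.I) * (Complex.exp ((φ:ℂ) * Complex.I) - a) / mobA a φ
    = Complex.exp ((α : ℂ) * Complex.I) * ((1 - Complex.normSq a : ℝ) : ℂ)
        * (Complex.exp ((θ:ℂ) * Complex.I) - Complex.exp ((φ:ℂ) * Complex.I))
        / (mobA a θ * mobA a φ) := by
  have h1 := mobA_ne ha θ
  have h2 := mobA_ne ha φ
  simp only [mobA] at h1 h2 ⊢
  rw [div_sub_div _ _ h1 h2, div_left_inj' (mul_ne_zero h1 h2)]; push_cast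
  first
  | linear_combination (Complex.exp ((α:ℂ)*Complex.I) *
      (Complex.exp ((θ:ℂ)*Complex.I) - Complex.exp ((φ:ℂ)*Complex.I))) * Complex.mul_conj a
  | linear_combination (-(Complex.exp ((α:ℂ)*Complex.I) *
      (Complex.exp ((θ:ℂ)*Complex.I) - Complex.exp ((φ:ℂ)*Complex.I)))) * Complex.mul_conj a

lemma mobKey (ha : ‖a‖ < 1) (α θ φ : ℝ) :
    4 * Real.sin ((mobTheta a α θ - mobTheta a α φ) / 2) ^ 2
      = mobRho a θ * mobRho a φ * (4 * Real.sin ((θ - φ) / 2) ^ 2) := by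
  rw [← abs_exp_sub_sq (mobTheta a α θ) (mobTheta a α φ), ← abs_exp_sub_sq θ φ,
    exp_mobTheta ha, exp_mobTheta ha, mob_diff ha]
  rw [norm_div, norm_mul, norm_mul, Complex.norm_exp_ofReal_mul_I, Complex.norm_real, Real.norm_eq_abs, norm_mul,
    one_mul, abs_of_pos (by linarith [normSq_a_lt ha] : (0:ℝ) < 1 - Complex.normSq a),
    div_pow, mul_pow, mul_pow, Complex.sq_norm, Complex.sq_norm, Complex.sq_norm]
  rw [mobRho, mobRho]
  have n1 := (normSq_mobA_pos ha θ).ne'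
  have n2 := (normSq_mobA_pos ha φ).ne'
  field_simp
  try left; trivial

lemma mobTheta_strictMono (ha : ‖a‖ < 1) (α : ℝ) : StrictMono (mobTheta a α) :=
  strictMono_of_deriv_pos fun x => by
    rw [(hasDerivAt_mobTheta ha α x).deriv]; exact mobRho_pos ha x

lemma mobTheta_continuous (ha : ‖a‖ < 1) (α : ℝ) : Continuous (mobTheta a α) :=
  continuous_iff_continuousAt.2 fun x => (hasDerivAt_mobTheta ha α x).continuousAt

lemma mobTheta_image (ha : ‖a‖ < 1) (α : ℝ) :
    mobTheta a α '' Set.Icc 0 (2 * π)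
      = Set.Icc (mobTheta a α 0) (mobTheta a α 0 + 2 * π) := by
  apply Set.Subset.antisymm
  · rintro y ⟨x, hx, rfl⟩
    have h1 := (mobTheta_strictMono ha α).monotone hx.1
    have h2 := (mobTheta_strictMono ha α).monotone hx.2
    rw [mobTheta_two_pi] at h2
    exact ⟨h1, h2⟩
  · rw [← mobTheta_two_pi (a := a) α]
    exact intermediate_value_Icc (by positivity) (mobTheta_continuous ha α).continuousOn

lemma mob_main_sub (ha : ‖a‖ < 1) (α : ℝ) (G : ℝ → ℝ≥0∞)
    (hG : ∀ y, G (y + 2 * π) = G y) :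
    ∫⁻ φ in Set.Icc 0 (2 * π), ENNReal.ofReal (mobRho a φ) * G (mobTheta a α φ)
      = ∫⁻ y in Set.Icc 0 (2 * π), G y := by
  have hcov := lint_cov (s := Set.Icc 0 (2 * π)) measurableSet_Icc
    (f := mobTheta a α) (f' := mobRho a)
    (fun x _ => (hasDerivAt_mobTheta ha α x).hasDerivWithinAt)
    ((mobTheta_strictMono ha α).injective.injOn) G
  rw [mobTheta_image ha α] at hcov
  have habs : ∀ x : ℝ, ENNReal.ofReal |mobRho a x| = ENNReal.ofReal (mobRho a x) := fun x => by
    rw [abs_of_pos (mobRho_pos ha x)]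
  calc ∫⁻ φ in Set.Icc 0 (2 * π), ENNReal.ofReal (mobRho a φ) * G (mobTheta a α φ)
      = ∫⁻ φ in Set.Icc 0 (2 * π), ENNReal.ofReal |mobRho a φ| * G (mobTheta a α φ) :=
        lintegral_congr fun x => by rw [habs x]
    _ = ∫⁻ y in Set.Icc (mobTheta a α 0) (mobTheta a α 0 + 2 * π), G y := hcov.symm
    _ = ∫⁻ y in Set.Icc 0 (2 * π), G y :=
        lint_periodic_Icc G (2 * π) (by positivity) hG _

/-- The Douglas functional is invariant under precomposition with the
boundary values of any conformal automorphism z ↦ e^{iα}(z − a)/(1 − ā z) of the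
unit disc. -/
theorem stmt19 {n : ℕ} (g : ℂ → EuclideanSpace ℝ (Fin n)) (hmeas : Measurable g)
    (a : ℂ) (ha : ‖a‖ < 1) (α : ℝ)
    (M : ℂ → ℂ)
    (hM : ∀ z : ℂ, M z = Complex.exp (α * Complex.I) * (z - a) / (1 - (starRingEnd ℂ) a * z)) :
    douglasACircle (g ∘ M) = douglasACircle g := by
  have ha' : ‖a‖ < 1 := by exact ha
  set F : ℝ → ℝ → ℝ≥0∞ := fun x y => ENNReal.ofReal
    (‖g (Complex.exp ((x:ℂ) * Complex.I)) - g (Complex.exp ((y:ℂ) * Complex.I))‖ ^ 2 /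
      (4 * Real.sin ((x - y) / 2) ^ 2)) with hF
  have hexp_per : ∀ x : ℝ, Complex.exp (((x + 2*π : ℝ):ℂ) * Complex.I)
      = Complex.exp ((x:ℂ) * Complex.I) := by
    intro x
    rw [show (((x + 2*π : ℝ)):ℂ) * Complex.I
        = (x:ℂ) * Complex.I + 2 * (π:ℂ) * Complex.I by push_cast; ring,
      Complex.exp_add, Complex.exp_two_pi_mul_I, mul_one]
  have hsin_per : ∀ t : ℝ, Real.sin ((t + 2*π) / 2) ^ 2 = Real.sin (t / 2) ^ 2 := by
    intro t
    rw [show (t + 2*π)/2 = t/2 + π by ring, Real.sin_add_pi]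
    ring
  have hF_per1 : ∀ x y, F (x + 2*π) y = F x y := by
    intro x y
    simp only [hF]
    rw [hexp_per, show x + 2*π - y = (x - y) + 2*π by ring, hsin_per]
  have hF_per2 : ∀ x y, F x (y + 2*π) = F x y := by
    intro x y
    simp only [hF]
    rw [hexp_per, show x - (y + 2*π) = (x - y) + -(2*π) by ring]
    congr 3
    rw [show ((x-y) + -(2*π))/2 = ((x - y) - 2*π)/2 by ring,
      show ((x-y) - 2*π)/2 = (x-y)/2 - π by ring, Real.sin_sub_pi]
    ring
  -- the boundary map
  have hMexp : ∀ θ : ℝ, M (Complex.exp ((θ:ℂ) * Complex.I))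
      = Complex.exp ((mobTheta a α θ : ℂ) * Complex.I) := by
    intro θ
    rw [hM, exp_mobTheta ha' α θ, mobA]
  -- pointwise identity
  have hpoint : ∀ θ φ : ℝ,
      ENNReal.ofReal
        (‖(g ∘ M) (Complex.exp ((θ:ℂ) * Complex.I)) - (g ∘ M) (Complex.exp ((φ:ℂ) * Complex.I))‖ ^ 2 /
          (4 * Real.sin ((θ - φ) / 2) ^ 2))
      = ENNReal.ofReal (mobRho a θ) * (ENNReal.ofReal (mobRho a φ)
          * F (mobTheta a α θ) (mobTheta a α φ)) := by
    intro θ φ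
    have hρθ := mobRho_pos ha' θ
    have hρφ := mobRho_pos ha' φ
    have hreal : ‖(g ∘ M) (Complex.exp ((θ:ℂ) * Complex.I))
          - (g ∘ M) (Complex.exp ((φ:ℂ) * Complex.I))‖ ^ 2 /
          (4 * Real.sin ((θ - φ) / 2) ^ 2)
        = mobRho a θ * (mobRho a φ *
          (‖g (Complex.exp ((mobTheta a α θ : ℂ) * Complex.I))
            - g (Complex.exp ((mobTheta a α φ : ℂ) * Complex.I))‖ ^ 2 /
          (4 * Real.sin ((mobTheta a α θ - mobTheta a α φ) / 2) ^ 2))) := by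
      simp only [Function.comp_apply, hMexp]
      rw [mobKey ha' α θ φ]
      rw [← mul_assoc, ← mul_div_assoc]
      rw [mul_div_mul_left _ _ (by positivity : mobRho a θ * mobRho a φ ≠ 0)]
    rw [hreal, ENNReal.ofReal_mul hρθ.le, ENNReal.ofReal_mul hρφ.le]
  -- assemble
  rw [douglasACircle, douglasACircle]
  congr 1
  calc ∫⁻ θ in Set.Icc (0:ℝ) (2*π), ∫⁻ φ in Set.Icc (0:ℝ) (2*π),
        ENNReal.ofReal
          (‖(g ∘ M) (Complex.exp ((θ:ℂ) * Complex.I)) - (g ∘ M) (Complex.exp ((φ:ℂ) * Complex.I))‖ ^ 2 /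
            (4 * Real.sin ((θ - φ) / 2) ^ 2))
      = ∫⁻ θ in Set.Icc (0:ℝ) (2*π), ENNReal.ofReal (mobRho a θ) *
          ∫⁻ φ in Set.Icc (0:ℝ) (2*π), ENNReal.ofReal (mobRho a φ)
            * F (mobTheta a α θ) (mobTheta a α φ) := by
        apply lintegral_congr
        intro θ
        rw [← lintegral_const_mul' _ _ ENNReal.ofReal_ne_top]
        exact lintegral_congr fun φ => hpoint θ φ
    _ = ∫⁻ θ in Set.Icc (0:ℝ) (2*π), ENNReal.ofReal (mobRho a θ) *
          ∫⁻ y in Set.Icc (0:ℝ) (2*π), F (mobTheta a α θ) y := by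
        apply lintegral_congr
        intro θ
        congr 1
        exact mob_main_sub ha' α (F (mobTheta a α θ)) (fun y => hF_per2 _ y)
    _ = ∫⁻ x in Set.Icc (0:ℝ) (2*π), ∫⁻ y in Set.Icc (0:ℝ) (2*π), F x y := by
        apply mob_main_sub ha' α (fun x => ∫⁻ y in Set.Icc (0:ℝ) (2*π), F x y)
        intro x
        exact lintegral_congr fun y => hF_per1 x y
    _ = _ := rfl
end
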